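/- Let G be a permutation group on a finite set Ω and N a normal subgroup of G. Then the height satisfies H(G) ≤ H(N) + ℓ(G/N), where ℓ(G/N) is the maximal length of a strictly decreasing subgroup chain in G/N. -/

import Mathlib

/-- The pointwise stabilizer of a set `Λ` in a group `G` acting on `Ω`. -/
def ptStab (G : Type*) [Group G] {Ω : Type*} [MulAction G Ω] (Λ : Set Ω) : Subgroup G :=
  ⨅ ω ∈ Λ, MulAction.stabilizer G ω

/-- `Λ` is an independent set: its pointwise stabilizer differs from that of
every proper subset. -/
def IsIndep (G : Type*) [Group G] {Ω : Type*} [MulAction G Ω] (Λ : Set Ω) : Prop :=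
  ∀ Δ : Set Ω, Δ ⊂ Λ → ptStab G Δ ≠ ptStab G Λ

/-- The height of `G` on `Ω`: the maximum size of an independent set. -/
noncomputable def height (G : Type*) [Group G] (Ω : Type*) [MulAction G Ω] : ℕ :=
  sSup {k | ∃ Λ : Set Ω, IsIndep G Λ ∧ Λ.ncard = k}

/-- `ℓ(G)`: the maximum length of a strictly decreasing chain of subgroups of `G`. -/
noncomputable def chainLen (G : Type*) [Group G] : ℕ :=
  sSup {k | ∃ c : Fin (k + 1) → Subgroup G, StrictAnti c ∧ c 0 = ⊤}

section Aux

variable {G : Type*} [Group G] {Ω : Type*} [MulAction G Ω]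

lemma mem_ptStab {Λ : Set Ω} {g : G} : g ∈ ptStab G Λ ↔ ∀ ω ∈ Λ, g • ω = ω := by
  simp [ptStab, Subgroup.mem_iInf, MulAction.mem_stabilizer_iff]

lemma ptStab_anti {Δ Λ : Set Ω} (h : Δ ⊆ Λ) : ptStab G Λ ≤ ptStab G Δ := by
  intro g hg
  rw [mem_ptStab] at *
  exact fun ω hω => hg ω (h hω)

lemma ptStab_comap (N : Subgroup G) (Δ : Set Ω) :
    ptStab ↥N Δ = (ptStab G Δ).comap N.subtype := by
  ext n
  simp [mem_ptStab, Subgroup.mem_comap, Subgroup.mem_subgroupOf, Subgroup.smul_def]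

/-- Dedekind-type lemma. -/
lemma dedekind (N : Subgroup G) [N.Normal] {H K : Subgroup G}
    (hle : H ≤ K) (hinf : H.comap N.subtype = K.comap N.subtype)
    (hmap : H.map (QuotientGroup.mk' N) = K.map (QuotientGroup.mk' N)) : H = K := by
  refine le_antisymm hle fun k hk => ?_
  have hmem : QuotientGroup.mk' N k ∈ H.map (QuotientGroup.mk' N) := by
    rw [hmap]; exact ⟨k, hk, rfl⟩
  obtain ⟨h, hh, hhk⟩ := hmem
  have hn : h⁻¹ * k ∈ N := by
    have : (QuotientGroup.mk' N) (h⁻¹ * k) = 1 := by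
      rw [map_mul, map_inv, hhk, inv_mul_cancel]
    rwa [← QuotientGroup.ker_mk' N, MonoidHom.mem_ker]
  have hnK : h⁻¹ * k ∈ K := K.mul_mem (K.inv_mem (hle hh)) hk
  have : (⟨h⁻¹ * k, hn⟩ : ↥N) ∈ K.comap N.subtype := hnK
  rw [← hinf] at this
  have hnH : h⁻¹ * k ∈ H := this
  have : h * (h⁻¹ * k) ∈ H := H.mul_mem hh hnH
  simpa using this

/-- A strictly decreasing chain of length `m+1` gives `m ≤ chainLen`. -/
lemma le_chainLen {Q : Type*} [Group Q] [Finite Q] {m : ℕ}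
    (c : Fin (m + 1) → Subgroup Q) (hc : StrictAnti c) : m ≤ chainLen Q := by
  have hbdd : BddAbove {k | ∃ c : Fin (k + 1) → Subgroup Q, StrictAnti c ∧ c 0 = ⊤} := by
    refine ⟨Nat.card (Subgroup Q), fun k ⟨c, hc, _⟩ => ?_⟩
    have : Nat.card (Fin (k + 1)) ≤ Nat.card (Subgroup Q) :=
      Nat.card_le_card_of_injective c hc.injective
    simp at this
    omega
  by_cases h0 : c 0 = ⊤
  · exact le_csSup hbdd ⟨c, hc, h0⟩
  · -- prepend ⊤, drop the last
    set c' : Fin (m + 1) → Subgroup Q := fun i =>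
      if h : (i : ℕ) = 0 then ⊤ else c ⟨(i : ℕ) - 1, by omega⟩ with hc'
    have hanti : StrictAnti c' := by
      intro i j hij
      have hij' : (i : ℕ) < (j : ℕ) := hij
      simp only [hc']
      rcases Nat.eq_zero_or_pos (i : ℕ) with hi | hi
      · rw [dif_pos hi, dif_neg (by omega)]
        have hle : c ⟨(j : ℕ) - 1, by omega⟩ ≤ c 0 := by
          rcases Nat.eq_zero_or_pos ((j : ℕ) - 1) with hj | hj
          · exact le_of_eq (by congr 1; exact Fin.ext hj)
          · refine le_of_lt (hc ?_)
            rw [Fin.lt_def]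
            simpa using hj
        exact lt_of_le_of_lt hle (lt_top_iff_ne_top.mpr h0)
      · rw [dif_neg (by omega), dif_neg (by omega)]
        exact hc (show ((⟨(i : ℕ) - 1, by omega⟩ : Fin (m + 1))) < ⟨(j : ℕ) - 1, by omega⟩ by
          simp only [Fin.mk_lt_mk]; omega)
    exact le_csSup hbdd ⟨c', hanti, by simp [hc']⟩

end Aux

section Main

variable {G Ω : Type*} [Group G] [Finite Ω] [MulAction G Ω]

/-- An element witnessing independence at `ω ∈ Λ`. -/
lemma exists_witness {Λ : Set Ω} (hΛ : IsIndep G Λ) {ω : Ω} (hω : ω ∈ Λ) :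
    ∃ g : G, g ∈ ptStab G (Λ \ {ω}) ∧ g • ω ≠ ω := by
  have hss : Λ \ {ω} ⊂ Λ := Set.sdiff_singleton_ssubset.mpr hω
  have hne := hΛ (Λ \ {ω}) hss
  have hlt : ptStab G Λ < ptStab G (Λ \ {ω}) :=
    lt_of_le_of_ne (ptStab_anti hss.subset) (Ne.symm hne)
  obtain ⟨g, hg1, hg2⟩ := SetLike.exists_of_lt hlt
  refine ⟨g, hg1, fun hfix => hg2 ?_⟩
  rw [mem_ptStab] at *
  intro x hx
  rcases eq_or_ne x ω with rfl | hxω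
  · exact hfix
  · exact hg1 x ⟨hx, hxω⟩

/-- The key chain construction. -/
lemma exists_chain (N : Subgroup G) [N.Normal] {Λ : Set Ω} (hΛ : IsIndep G Λ) :
    ∀ m (Δ : Set Ω), Δ ⊆ Λ → ptStab ↥N Δ = ptStab ↥N Λ → (Λ \ Δ).ncard = m →
      ∃ c : Fin (m + 1) → Subgroup (G ⧸ N), StrictAnti c ∧
        c 0 = (ptStab G Δ).map (QuotientGroup.mk' N) := by
  intro m
  induction m with
  | zero =>
    intro Δ _ _ _
    refine ⟨fun _ => (ptStab G Δ).map (QuotientGroup.mk' N), ?_, rfl⟩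
    intro i j hij
    have hi := i.isLt
    have hj := j.isLt
    rw [Fin.lt_def] at hij
    omega
  | succ m ih =>
    intro Δ hsub hstab hcard
    have hfin : (Λ \ Δ).Finite := Set.toFinite _
    have hne : (Λ \ Δ).Nonempty := by
      rw [← Set.ncard_pos hfin]; omega
    obtain ⟨ω, hωΛ, hωΔ⟩ := hne
    set Δ' : Set Ω := insert ω Δ with hΔ'
    have hsub' : Δ' ⊆ Λ := Set.insert_subset hωΛ hsub
    have hstab' : ptStab ↥N Δ' = ptStab ↥N Λ := by
      refine le_antisymm ?_ (ptStab_anti hsub')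
      rw [← hstab]
      exact ptStab_anti (Set.subset_insert ω Δ)
    have hcard' : (Λ \ Δ').ncard = m := by
      have heqset : Λ \ Δ' = (Λ \ Δ) \ {ω} := by
        ext x
        simp only [hΔ', Set.mem_diff, Set.mem_insert_iff, Set.mem_singleton_iff]
        tauto
      rw [heqset, Set.ncard_diff_singleton_of_mem (show ω ∈ Λ \ Δ from ⟨hωΛ, hωΔ⟩), hcard]
      omega
    obtain ⟨c, hc, hc0⟩ := ih Δ' hsub' hstab' hcard'
    -- key strict inequality at the junction
    obtain ⟨g, hg1, hg2⟩ := exists_witness hΛ hωΛ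
    have hDsub : Δ ⊆ Λ \ {ω} := fun x hx => ⟨hsub hx, fun hxω => hωΔ (hxω ▸ hx)⟩
    have hgΔ : g ∈ ptStab G Δ := ptStab_anti hDsub hg1
    have hltG : ptStab G Δ' < ptStab G Δ := by
      refine lt_of_le_of_ne (ptStab_anti (Set.subset_insert ω Δ)) fun heq => ?_
      have : g ∈ ptStab G Δ' := heq ▸ hgΔ
      exact hg2 (mem_ptStab.mp this ω (Set.mem_insert ω Δ))
    have hkey : (ptStab G Δ').map (QuotientGroup.mk' N) <
        (ptStab G Δ).map (QuotientGroup.mk' N) := by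
      refine lt_of_le_of_ne (Subgroup.map_mono hltG.le) fun heq => ?_
      have hcomap : (ptStab G Δ').comap N.subtype = (ptStab G Δ).comap N.subtype := by
        rw [← ptStab_comap, ← ptStab_comap, hstab', ← hstab]
      exact hltG.ne (dedekind N hltG.le hcomap heq)
    -- prepend
    set c' : Fin (m + 2) → Subgroup (G ⧸ N) := fun i =>
      if h : (i : ℕ) = 0 then (ptStab G Δ).map (QuotientGroup.mk' N)
      else c ⟨(i : ℕ) - 1, by omega⟩ with hc'def
    refine ⟨c', ?_, by simp [hc'def]⟩
    intro i j hij
    have hij' : (i : ℕ) < (j : ℕ) := hij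
    simp only [hc'def]
    rcases Nat.eq_zero_or_pos (i : ℕ) with hi | hi
    · rw [dif_pos hi, dif_neg (by omega)]
      have hle : c ⟨(j : ℕ) - 1, by omega⟩ ≤ c 0 := by
        rcases Nat.eq_zero_or_pos ((j : ℕ) - 1) with hj | hj
        · exact le_of_eq (by congr 1; exact Fin.ext hj)
        · refine le_of_lt (hc ?_)
          rw [Fin.lt_def]
          simpa using hj
      exact lt_of_le_of_lt (hle.trans_eq hc0) hkey
    · rw [dif_neg (by omega), dif_neg (by omega)]
      exact hc (show ((⟨(i : ℕ) - 1, by omega⟩ : Fin (m + 1))) < ⟨(j : ℕ) - 1, by omega⟩ by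
        simp only [Fin.mk_lt_mk]; omega)

end Main

/-- If `N ⊴ G`, then `H(G) ≤ H(N) + ℓ(G/N)`. -/
theorem height_le_height_normal_add_chainLen {G Ω : Type*} [Group G] [Finite G] [Finite Ω]
    [MulAction G Ω] [FaithfulSMul G Ω] (N : Subgroup G) [N.Normal] :
    height G Ω ≤ height N Ω + chainLen (G ⧸ N) := by
  have hempty : IsIndep G (∅ : Set Ω) := fun Δ hΔ => absurd (hΔ.subset.antisymm (Set.empty_subset Δ)) hΔ.ne
  refine csSup_le ⟨0, ∅, hempty, by simp⟩ ?_
  rintro k ⟨Λ, hΛ, rfl⟩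
  -- find a minimal subset Δ of Λ with the same N-stabilizer
  set S : Set ℕ := {n | ∃ Δ : Set Ω, Δ ⊆ Λ ∧ ptStab ↥N Δ = ptStab ↥N Λ ∧ Δ.ncard = n} with hS
  have hSne : S.Nonempty := ⟨Λ.ncard, Λ, subset_rfl, rfl, rfl⟩
  obtain ⟨Δ, hΔsub, hΔstab, hΔcard⟩ := Nat.sInf_mem hSne
  have hindepN : IsIndep ↥N Δ := by
    intro Δ' hss heq
    have hmem : Δ'.ncard ∈ S := ⟨Δ', hss.subset.trans hΔsub, heq.trans hΔstab, rfl⟩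
    have h1 := Nat.sInf_le hmem
    have h2 : Δ'.ncard < Δ.ncard := Set.ncard_lt_ncard hss (Set.toFinite _)
    omega
  have hbddN : BddAbove {k | ∃ Λ : Set Ω, IsIndep ↥N Λ ∧ Λ.ncard = k} := by
    refine ⟨Nat.card Ω, ?_⟩
    rintro k ⟨Λ', _, rfl⟩
    calc Λ'.ncard ≤ (Set.univ : Set Ω).ncard :=
          Set.ncard_le_ncard (Set.subset_univ _) Set.finite_univ
      _ = Nat.card Ω := Set.ncard_univ Ω
  have h1 : Δ.ncard ≤ height N Ω := le_csSup hbddN ⟨Δ, hindepN, rfl⟩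
  have h2 : (Λ \ Δ).ncard ≤ chainLen (G ⧸ N) := by
    obtain ⟨c, hc, _⟩ := exists_chain N hΛ (Λ \ Δ).ncard Δ hΔsub hΔstab rfl
    exact le_chainLen c hc
  have h3 : (Λ \ Δ).ncard + Δ.ncard = Λ.ncard :=
    Set.ncard_diff_add_ncard_of_subset hΔsub (Set.toFinite _)
  omega
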